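/- If A and B commute, then the joint spectral radius ρ(A,B) equals max(ρ(A), ρ(B)). -/

import Mathlib

open Filter

attribute [local instance] Matrix.linftyOpNormedRing Matrix.linftyOpNormedAlgebra

variable {d : ℕ}

lemma jsr_gelfand_real (M : Matrix (Fin d) (Fin d) ℂ) :
    Tendsto (fun n : ℕ => ‖M ^ (n+1)‖ ^ (((n:ℝ)+1)⁻¹)) atTop
      (nhds (spectralRadius ℂ M).toReal) := by
  have hfin : spectralRadius ℂ M ≠ ⊤ := by
    refine ne_top_of_le_ne_top ?_ (spectrum.spectralRadius_le_pow_nnnorm_pow_one_div ℂ M 0)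
    exact ENNReal.mul_ne_top
      (ENNReal.rpow_ne_top_of_nonneg (by norm_num) ENNReal.coe_ne_top)
      (ENNReal.rpow_ne_top_of_nonneg (by norm_num) ENNReal.coe_ne_top)
  have h := spectrum.pow_nnnorm_pow_one_div_tendsto_nhds_spectralRadius M
  have h2 := (ENNReal.tendsto_toReal hfin).comp (h.comp (tendsto_add_atTop_nat 1))
  convert h2 using 2 with n
  simp only [Function.comp_apply]
  rw [← ENNReal.toReal_rpow]
  push_cast
  rw [one_div, ENNReal.coe_toReal, coe_nnnorm]

lemma jsr_word_prod (A B : Matrix (Fin d) (Fin d) ℂ) (hAB : A * B = B * A)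
    (l : List Bool) :
    (l.map fun b => if b then A else B).prod
      = A ^ (l.count true) * B ^ (l.count false) := by
  induction l with
  | nil => simp
  | cons b l ih =>
    have hc : Commute B (A ^ (l.count true)) := (Commute.pow_right hAB.symm _)
    cases b <;> simp only [List.map_cons, List.prod_cons, if_true, if_false,
      List.count_cons, ih, beq_iff_eq, reduceIte, Bool.true_eq_false, Bool.false_eq_true]
    · rw [pow_succ', ← mul_assoc, ← mul_assoc, hc.eq, add_zero]
    · rw [pow_succ', add_zero, ← mul_assoc]

lemma jsr_count_add (l : List Bool) : l.count true + l.count false = l.length := by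
  induction l with
  | nil => rfl
  | cons b l ih =>
    cases b
    · rw [List.length_cons, List.count_cons_self, List.count_cons_of_ne (by decide)]
      omega
    · rw [List.length_cons, List.count_cons_self, List.count_cons_of_ne (by decide)]
      omega

lemma jsr_pow_bound (M : Matrix (Fin d) (Fin d) ℂ) (rM s : ℝ) (hs0 : 0 < s) (hlt : rM < s)
    (hM : Tendsto (fun n : ℕ => ‖M ^ (n+1)‖ ^ (((n:ℝ)+1)⁻¹)) atTop (nhds rM)) :
    ∃ C : ℝ, 1 ≤ C ∧ ∀ k, ‖M ^ k‖ ≤ C * s ^ k := by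
  obtain ⟨N, hN⟩ := eventually_atTop.1 (hM.eventually_lt_const hlt)
  have hsum : 0 ≤ ∑ j ∈ Finset.range (N+1), ‖M ^ j‖ / s ^ j :=
    Finset.sum_nonneg fun j _ => by positivity
  refine ⟨1 + ∑ j ∈ Finset.range (N+1), ‖M ^ j‖ / s ^ j, by linarith, fun k => ?_⟩
  rcases le_or_gt k N with hk | hk
  · have h1 : ‖M ^ k‖ / s ^ k ≤ ∑ j ∈ Finset.range (N+1), ‖M ^ j‖ / s ^ j :=
      Finset.single_le_sum (f := fun j => ‖M ^ j‖ / s ^ j) (fun j _ => by positivity) (Finset.mem_range.2 (by omega))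
    have hsk : (0:ℝ) < s ^ k := by positivity
    rw [div_le_iff₀ hsk] at h1
    calc ‖M ^ k‖ ≤ (∑ j ∈ Finset.range (N+1), ‖M ^ j‖ / s ^ j) * s ^ k := h1
      _ ≤ (1 + ∑ j ∈ Finset.range (N+1), ‖M ^ j‖ / s ^ j) * s ^ k := by nlinarith
  · obtain ⟨n, rfl⟩ : ∃ n, k = n + 1 := ⟨k - 1, by omega⟩
    have h1 := hN n (by omega)
    have h2 : ‖M ^ (n+1)‖ ≤ s ^ (n+1) := by
      have h3 : (‖M ^ (n+1)‖ ^ (((n:ℝ)+1)⁻¹)) ^ (n+1) ≤ s ^ (n+1) :=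
        pow_le_pow_left₀ (Real.rpow_nonneg (norm_nonneg _) _) h1.le _
      rwa [show ((n:ℝ)+1) = ((n+1 : ℕ) : ℝ) by push_cast; ring,
        Real.rpow_inv_natCast_pow (norm_nonneg _) (Nat.succ_ne_zero n)] at h3
    calc ‖M ^ (n+1)‖ ≤ s ^ (n+1) := h2
      _ ≤ (1 + ∑ j ∈ Finset.range (N+1), ‖M ^ j‖ / s ^ j) * s ^ (n+1) :=
        le_mul_of_one_le_left (by positivity) (by linarith)

/-- If `A` and `B` commute, then the joint spectral radius `ρ(A,B)` equals
`max(ρ(A), ρ(B))`. -/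
theorem joint_spectral_radius_of_commute
    (d : ℕ) (A B : Matrix (Fin d) (Fin d) ℂ) (hAB : A * B = B * A)
    (a : ℕ → ℝ)
    (ha : ∀ n : ℕ, a n = Finset.univ.sup' Finset.univ_nonempty
      (fun w : Fin n → Bool =>
        ‖(List.ofFn fun i => if w i then A else B).prod‖)) :
    Tendsto (fun n : ℕ => a (n+1) ^ (((n:ℝ)+1)⁻¹)) atTop
      (nhds (max (spectralRadius ℂ A).toReal (spectralRadius ℂ B).toReal)) := by
  have hA := jsr_gelfand_real A
  have hB := jsr_gelfand_real B
  set rA := (spectralRadius ℂ A).toReal with hrAdef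
  set rB := (spectralRadius ℂ B).toReal with hrBdef
  set r := max rA rB with hrdef
  have hrA0 : 0 ≤ rA := ENNReal.toReal_nonneg
  have hrB0 : 0 ≤ rB := ENNReal.toReal_nonneg
  have hr0 : 0 ≤ r := le_trans hrA0 (le_max_left _ _)
  rw [Metric.tendsto_atTop]
  intro ε hε
  set s := r + ε/2 with hsdef
  have hs0 : 0 < s := by positivity
  obtain ⟨CA, hCA1, hCA⟩ := jsr_pow_bound A rA s hs0
    (lt_of_le_of_lt (le_max_left _ _) (by rw [hsdef]; linarith)) hA
  obtain ⟨CB, hCB1, hCB⟩ := jsr_pow_bound B rB s hs0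
    (lt_of_le_of_lt (le_max_right _ _) (by rw [hsdef]; linarith)) hB
  set D := CA * CB with hDdef
  have hD1 : 1 ≤ D := by nlinarith
  have hD0 : 0 < D := by linarith
  have hp0 : Tendsto (fun n : ℕ => ((n:ℝ)+1)⁻¹) atTop (nhds 0) := by
    simpa [one_div] using (tendsto_one_div_add_atTop_nhds_zero_nat : Tendsto (fun n : ℕ => 1 / ((n:ℝ)+1)) atTop (nhds 0))
  have hDten : Tendsto (fun n : ℕ => D ^ (((n:ℝ)+1)⁻¹) * s) atTop (nhds s) := by
    have h1 : Tendsto (fun n : ℕ => Real.log D * ((n:ℝ)+1)⁻¹) atTop (nhds 0) := by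
      simpa using hp0.const_mul (Real.log D)
    have h2 := (Real.continuous_exp.tendsto 0).comp h1
    rw [Real.exp_zero] at h2
    have h3 : Tendsto (fun n : ℕ => D ^ (((n:ℝ)+1)⁻¹)) atTop (nhds 1) := by
      convert h2 using 2 with n
      rw [Function.comp_apply, Real.rpow_def_of_pos hD0]
    simpa using h3.mul_const s
  have hupper := hDten.eventually_lt_const (show s < r + ε by rw [hsdef]; linarith)
  have hlowA := hA.eventually_const_lt (show rA - ε < rA by linarith)
  have hlowB := hB.eventually_const_lt (show rB - ε < rB by linarith)
  obtain ⟨N, hN⟩ := eventually_atTop.1 ((hupper.and (hlowA.and hlowB)))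
  refine ⟨N, fun n hn => ?_⟩
  obtain ⟨h3, h1, h2⟩ := hN n hn
  set p := ((n:ℝ)+1)⁻¹ with hpdef
  have hp : (0:ℝ) < p := by positivity
  have hAn : ‖A ^ (n+1)‖ ≤ a (n+1) := by
    rw [ha]
    have hmem := Finset.le_sup'
      (f := fun w : Fin (n+1) → Bool =>
        ‖(List.ofFn fun i => if w i then A else B).prod‖)
      (Finset.mem_univ (fun _ : Fin (n+1) => true))
    have e1 : (List.ofFn fun i : Fin (n+1) => if (fun _ : Fin (n+1) => true) i then A else B)
        = (List.ofFn fun _ : Fin (n+1) => (true : Bool)).map (fun b => if b then A else B) := by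
      rw [List.map_ofFn]; rfl
    rw [e1, jsr_word_prod A B hAB, List.ofFn_const] at hmem
    refine le_trans (le_of_eq ?_) hmem
    simp [List.count_replicate]
  have hBn : ‖B ^ (n+1)‖ ≤ a (n+1) := by
    rw [ha]
    have hmem := Finset.le_sup'
      (f := fun w : Fin (n+1) → Bool =>
        ‖(List.ofFn fun i => if w i then A else B).prod‖)
      (Finset.mem_univ (fun _ : Fin (n+1) => false))
    have e1 : (List.ofFn fun i : Fin (n+1) => if (fun _ : Fin (n+1) => false) i then A else B)
        = (List.ofFn fun _ : Fin (n+1) => (false : Bool)).map (fun b => if b then A else B) := by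
      rw [List.map_ofFn]; rfl
    rw [e1, jsr_word_prod A B hAB, List.ofFn_const] at hmem
    refine le_trans (le_of_eq ?_) hmem
    simp [List.count_replicate]
  have ha0 : 0 ≤ a (n+1) := le_trans (norm_nonneg _) hAn
  have hlow : r - ε < a (n+1) ^ p := by
    rcases max_cases rA rB with ⟨hm, _⟩ | ⟨hm, _⟩
    · calc r - ε = rA - ε := by rw [hrdef, hm]
        _ < ‖A ^ (n+1)‖ ^ p := h1
        _ ≤ a (n+1) ^ p := Real.rpow_le_rpow (norm_nonneg _) hAn hp.le
    · calc r - ε = rB - ε := by rw [hrdef, hm]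
        _ < ‖B ^ (n+1)‖ ^ p := h2
        _ ≤ a (n+1) ^ p := Real.rpow_le_rpow (norm_nonneg _) hBn hp.le
  have hup : a (n+1) ≤ D * s ^ (n+1) := by
    rw [ha]
    refine Finset.sup'_le _ _ fun w _ => ?_
    have hofn : (List.ofFn fun i => if w i then A else B)
        = (List.ofFn w).map (fun b => if b then A else B) := by
      rw [List.map_ofFn]; rfl
    rw [hofn, jsr_word_prod A B hAB]
    have hkm : (List.ofFn w).count true + (List.ofFn w).count false = n + 1 := by
      rw [jsr_count_add, List.length_ofFn]
    calc ‖A ^ ((List.ofFn w).count true) * B ^ ((List.ofFn w).count false)‖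
        ≤ ‖A ^ ((List.ofFn w).count true)‖ * ‖B ^ ((List.ofFn w).count false)‖ :=
          norm_mul_le _ _
      _ ≤ (CA * s ^ ((List.ofFn w).count true)) * (CB * s ^ ((List.ofFn w).count false)) :=
          mul_le_mul (hCA _) (hCB _) (norm_nonneg _) (by positivity)
      _ = D * s ^ ((List.ofFn w).count true + (List.ofFn w).count false) := by
          rw [pow_add]; ring
      _ = D * s ^ (n+1) := by rw [hkm]
  have hup2 : a (n+1) ^ p ≤ D ^ p * s := by
    have h4 : a (n+1) ^ p ≤ (D * s ^ (n+1)) ^ p := Real.rpow_le_rpow ha0 hup hp.le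
    rwa [show p = (((n+1 : ℕ) : ℝ))⁻¹ by rw [hpdef]; push_cast; ring,
      Real.mul_rpow hD0.le (by positivity),
      Real.pow_rpow_inv_natCast hs0.le (Nat.succ_ne_zero n),
      show (((n+1 : ℕ) : ℝ))⁻¹ = p by rw [hpdef]; push_cast; ring] at h4
  have hfin : a (n+1) ^ p < r + ε := lt_of_le_of_lt hup2 h3
  rw [Real.dist_eq, abs_sub_lt_iff]
  constructor <;> linarith
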